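/- Let (U,≤) be a past-finite causal set realizing all one-point stem-extensions of finite stems. Then for any finite antichain A ⊆ U (possibly empty) and any y ∈ U \ A with A ⊆ past(y), there exists x ∈ U \ A with x incomparable to y and past(x) = past(A) ∪ {x}. -/

import Mathlib

/-- A stem (downward closed subset) of a poset. -/
def IsStemIn {U : Type*} [PartialOrder U] (A : Set U) : Prop :=
  ∀ ⦃y x : U⦄, x ∈ A → y ≤ x → y ∈ A

/-- `U` realizes all one-point stem-extensions of finite stems of `U`:
whenever `A` is a finite stem of `U` and `B` is a finite poset containing (an
isomorphic copy of) `A` as a stem with `|B| = |A| + 1`, there is a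
stem-embedding `g : B → U` fixing `A` pointwise. -/
def RealizesOnePointExt (U : Type*) [PartialOrder U] : Prop :=
  ∀ (A : Set U), A.Finite → IsStemIn A →
    ∀ (B : Type) (_ : PartialOrder B) (f : A ↪o B),
      (∀ (b : B) (a : A), b ≤ f a → ∃ a' : A, f a' = b) →
      Nat.card B = A.ncard + 1 →
      ∃ g : B ↪o U, (∀ a : A, g (f a) = (a : U)) ∧
        ∀ (u : U) (b : B), u ≤ g b → ∃ b' : B, g b' = u

/-- Auxiliary relation on `Option α`: `none` is a new point lying
above exactly the elements satisfying `P`. -/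
def optLE {α : Type*} [PartialOrder α] (P : α → Prop) : Option α → Option α → Prop :=
  fun x y => match x, y with
    | some s, some t => s ≤ t
    | some s, none => P s
    | none, none => True
    | none, some _ => False

/-- Auxiliary order on `Option α` induced by `optLE`. -/
def optOrder {α : Type*} [PartialOrder α] (P : α → Prop)
    (hP : ∀ ⦃s t : α⦄, s ≤ t → P t → P s) : PartialOrder (Option α) where
  le := optLE P
  lt x y := optLE P x y ∧ ¬ optLE P y x
  lt_iff_le_not_ge _ _ := Iff.rfl
  le_refl x := by cases x <;> simp [optLE]
  le_trans x y z hxy hyz := by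
    cases x <;> cases y <;> cases z <;> simp_all [optLE]
    · exact hP hxy hyz
    · exact le_trans hxy hyz
  le_antisymm x y hxy hyx := by
    cases x <;> cases y <;> simp_all [optLE]
    exact le_antisymm hxy hyx


/-- If a past-finite causal set realizes all one-point
stem-extensions of finite stems, then for any finite antichain A and any
y ∉ A with A ⊆ past(y) there is x ∉ A incomparable to y with
past(x) = past(A) ∪ {x}. -/
theorem stmt_11 {U : Type*} [PartialOrder U]
    (hpf : ∀ x : U, {s : U | s ≤ x}.Finite)
    (hreal : RealizesOnePointExt U)
    (A : Set U) (hA : A.Finite)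
    (hanti : ∀ a ∈ A, ∀ b ∈ A, a ≠ b → ¬ a ≤ b)
    (y : U) (hy : y ∉ A) (hAy : ∀ a ∈ A, a ≤ y) :
    ∃ x : U, x ∉ A ∧ ¬ x ≤ y ∧ ¬ y ≤ x ∧
      {s : U | s ≤ x} = (⋃ a ∈ A, {s : U | s ≤ a}) ∪ {x} := by
  classical
  set S : Set U := {s | s ≤ y} with hSdef
  have hSfin : S.Finite := hpf y
  have hSstem : IsStemIn S := fun u x hx hux => le_trans hux hx
  haveI : Fintype ↥S := hSfin.fintype
  set n := Fintype.card ↥S with hn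
  set e : ↥S ≃ Fin n := Fintype.equivFin ↥S with he
  have hinj : Function.Injective (fun i : Fin n => ((e.symm i : ↥S) : U)) :=
    Subtype.val_injective.comp e.symm.injective
  letI pF : PartialOrder (Fin n) := PartialOrder.lift _ hinj
  set P : Fin n → Prop := fun i => ∃ a ∈ A, ((e.symm i : ↥S) : U) ≤ a with hPdef
  have hP : ∀ ⦃s t : Fin n⦄, pF.le s t → P t → P s := by
    rintro s t hst ⟨a, ha, hta⟩
    refine ⟨a, ha, le_trans ?_ hta⟩
    exact hst
  letI : PartialOrder (Option (Fin n)) := @optOrder (Fin n) pF P hP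
  letI : LE (Option (Fin n)) := (@optOrder (Fin n) pF P hP).toLE
  have hnone_le : ∀ i : Fin n, ¬ ((none : Option (Fin n)) ≤ some i) := fun _ h => h
  have hle_none : ∀ i : Fin n, ((some i : Option (Fin n)) ≤ none) ↔ P i := fun _ => Iff.rfl
  set f : ↥S ↪o Option (Fin n) :=
    ⟨⟨fun s => some (e s), (Option.some_injective _).comp e.injective⟩, by
      intro a b
      show ((e.symm (e a) : ↥S) : U) ≤ ((e.symm (e b) : ↥S) : U) ↔ _
      rw [e.symm_apply_apply, e.symm_apply_apply]
      exact Iff.rfl⟩ with hf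
  have hstemf : ∀ (b : Option (Fin n)) (a : ↥S), b ≤ f a → ∃ a' : ↥S, f a' = b := by
    intro b a hb
    cases b with
    | none => exact absurd hb (hnone_le _)
    | some i => exact ⟨e.symm i, by simp [hf]⟩
  have hcard : Nat.card (Option (Fin n)) = S.ncard + 1 := by
    rw [Nat.card_eq_fintype_card, Fintype.card_option, ← Nat.card_coe_set_eq,
      Nat.card_eq_fintype_card, Fintype.card_fin]
  obtain ⟨g, hg1, hg2⟩ := hreal S hSfin hSstem (Option (Fin n)) _ f hstemf hcard
  have hgs : ∀ s : ↥S, g (some (e s)) = (s : U) := hg1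
  have hgs' : ∀ i : Fin n, g (some i) = ((e.symm i : ↥S) : U) := by
    intro i
    have := hgs (e.symm i)
    rwa [e.apply_symm_apply] at this
  set x : U := g none with hx
  have hxy : ¬ x ≤ y := by
    intro h
    have hyS : y ∈ S := le_refl y
    have : g none ≤ g (some (e ⟨y, hyS⟩)) := by rw [hgs]; exact h
    exact hnone_le _ (g.le_iff_le.mp this)
  have hxA : x ∉ A := fun h => hxy (hAy x h)
  have hyx : ¬ y ≤ x := by
    intro h
    obtain ⟨b, hb⟩ := hg2 y none h
    cases b with
    | none =>
      exact hxy (le_of_eq (by rw [hx, hb]))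
    | some i =>
      have hsy : ((e.symm i : ↥S) : U) = y := by rw [← hgs' i, hb]
      have : (some i : Option (Fin n)) ≤ none :=
        g.le_iff_le.mp (by rw [hgs', hsy]; exact h)
      obtain ⟨a, ha, hsa⟩ := (hle_none i).mp this
      have hya : y ≤ a := hsy ▸ hsa
      have : y = a := le_antisymm hya (hAy a ha)
      exact hy (this ▸ ha)
  refine ⟨x, hxA, hxy, hyx, ?_⟩
  ext u
  simp only [Set.mem_setOf_eq, Set.mem_union, Set.mem_iUnion, Set.mem_singleton_iff]
  constructor
  · intro hu
    obtain ⟨b, hb⟩ := hg2 u none hu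
    cases b with
    | none => exact Or.inr hb.symm
    | some i =>
      have hsu : ((e.symm i : ↥S) : U) = u := by rw [← hgs' i, hb]
      have : (some i : Option (Fin n)) ≤ none :=
        g.le_iff_le.mp (by rw [hgs', hsu]; exact hu)
      obtain ⟨a, ha, hsa⟩ := (hle_none i).mp this
      exact Or.inl ⟨a, ha, hsu ▸ hsa⟩
  · rintro (⟨a, ha, hua⟩ | rfl)
    · have huS : u ∈ S := le_trans hua (hAy a ha)
      have h1 : (some (e ⟨u, huS⟩) : Option (Fin n)) ≤ none := by
        rw [hle_none]
        exact ⟨a, ha, by rw [e.symm_apply_apply]; exact hua⟩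
      have := g.le_iff_le.mpr h1
      rwa [hgs] at this
    · exact le_refl x
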